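/- Let α ∈ (0, 1/2], β ∈ [0, α/2), and let S be an (α,β)-admissible N×N real matrix (N ≥ 2). Then the image of the convex hull of V̄ under (S⊗I₂)ᵀ equals the intersection of the image of the crosspolytope P̄ under (S⊗I₂)ᵀ with the subspace H̄; that is, {(S⊗I₂)ᵀ x : x ∈ conv V̄} = {(S⊗I₂)ᵀ y : y ∈ P̄} ∩ H̄. -/
import Mathlib


open Finset

/-- The crosspolytope in `ℝ^{2N}`, identified with functions `Fin N × Fin 2 → ℝ`. -/
def crossPolytope2 (N : ℕ) : Set (Fin N × Fin 2 → ℝ) := {x | ∑ il, |x il| ≤ 1}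

/-- The codimension-2 subspace `H̄ = {x : ∑_i x(i,j) = 0 for j = 1,2}`. -/
def subspaceHbar (N : ℕ) : Set (Fin N × Fin 2 → ℝ) :=
  {x | ∀ j : Fin 2, ∑ i, x (i, j) = 0}

/-- The vertex set `V̄` of vectors `v_{p,q,j}` with `p ≠ q`, `j ∈ {1,2}`. -/
def vertexSetVbar (N : ℕ) : Set (Fin N × Fin 2 → ℝ) :=
  {v | ∃ p q : Fin N, ∃ j : Fin 2, p ≠ q ∧
    v = fun il => if il = (p, j) then (1 / 2 : ℝ) else if il = (q, j) then -(1 / 2 : ℝ) else 0}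

/-- The action of `(S ⊗ I₂)ᵀ` on `ℝ^{2N}`: `((S⊗I₂)ᵀ x)(i,j) = ∑ k, S k i * x (k,j)`. -/
def kronTr {N : ℕ} (S : Matrix (Fin N) (Fin N) ℝ) (x : Fin N × Fin 2 → ℝ) :
    Fin N × Fin 2 → ℝ :=
  fun il => ∑ k, S k il.1 * x (k, il.2)

/-- An `N × N` real matrix `S` is `(α,β)`-admissible if every row sums to `1`,
the negative part of every row sums to at least `-β`, and every pair of distinct
rows shares a column where both entries are at least `α` (neighbor-shared). -/
def Admissible {N : ℕ} (α β : ℝ) (S : Matrix (Fin N) (Fin N) ℝ) : Prop :=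
  (∀ i, ∑ j, S i j = 1) ∧ (∀ i, -β ≤ ∑ j, min (S i j) 0) ∧
    (∀ p q : Fin N, p ≠ q → ∃ i, α ≤ S p i ∧ α ≤ S q i)

lemma sum_ite_pair {M : Type*} [Fintype M] [DecidableEq M] {a b : M} (hab : a ≠ b) (s t : ℝ) :
    ∑ m, (if m = a then s else if m = b then t else 0) = s + t := by
  have h : ∀ m, (if m = a then s else if m = b then t else 0)
      = (if m = a then s else 0) + (if m = b then t else 0) := by
    intro m
    by_cases h1 : m = a
    · subst h1; simp [hab]
    · simp [h1]
  simp_rw [h, Finset.sum_add_distrib, Finset.sum_ite_eq', Finset.mem_univ, if_true]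

/-- abbreviation for a vertex -/
noncomputable def vfun {N : ℕ} (p q : Fin N) (j : Fin 2) : Fin N × Fin 2 → ℝ :=
  fun il => if il = (p, j) then (1 / 2 : ℝ) else if il = (q, j) then -(1 / 2 : ℝ) else 0

lemma vfun_mem {N : ℕ} {p q : Fin N} (j : Fin 2) (hpq : p ≠ q) :
    vfun p q j ∈ vertexSetVbar N := ⟨p, q, j, hpq, rfl⟩

lemma vfun_abs_sum {N : ℕ} {p q : Fin N} (j : Fin 2) (hpq : p ≠ q) :
    ∑ il, |vfun p q j il| = 1 := by
  have hab : (p, j) ≠ (q, j) := by simp [hpq]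
  have h : ∀ il, |vfun p q j il|
      = if il = (p, j) then (1 / 2 : ℝ) else if il = (q, j) then (1 / 2 : ℝ) else 0 := by
    intro il
    unfold vfun
    by_cases h1 : il = (p, j)
    · subst h1; simp [hab]
    · by_cases h2 : il = (q, j)
      · subst h2; simp [h1, hpq.symm]
      · simp [h1, h2]
  simp_rw [h, sum_ite_pair hab]
  norm_num

lemma vfun_colsum {N : ℕ} {p q : Fin N} (j : Fin 2) (hpq : p ≠ q) (j' : Fin 2) :
    ∑ i, vfun p q j (i, j') = 0 := by
  unfold vfun
  by_cases hj : j' = j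
  · subst hj
    have h : ∀ i : Fin N, (if (i, j') = (p, j') then (1 / 2 : ℝ)
        else if (i, j') = (q, j') then -(1 / 2 : ℝ) else 0)
        = if i = p then (1 / 2 : ℝ) else if i = q then -(1 / 2 : ℝ) else 0 := by
      intro i; simp [Prod.ext_iff]
    simp_rw [h, sum_ite_pair hpq]
    norm_num
  · have h : ∀ i : Fin N, (if (i, j') = (p, j) then (1 / 2 : ℝ)
        else if (i, j') = (q, j) then -(1 / 2 : ℝ) else 0) = 0 := by
      intro i; simp [Prod.ext_iff, hj]
    simp_rw [h, Finset.sum_const_zero]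

lemma convex_cross (N : ℕ) : Convex ℝ (crossPolytope2 N) := by
  intro x hx y hy a b ha hb hab
  simp only [crossPolytope2, Set.mem_setOf_eq] at *
  calc ∑ il, |(a • x + b • y) il| ≤ ∑ il, (a * |x il| + b * |y il|) := by
        apply Finset.sum_le_sum
        intro il _
        simp only [Pi.add_apply, Pi.smul_apply, smul_eq_mul]
        calc |a * x il + b * y il| ≤ |a * x il| + |b * y il| := abs_add_le _ _
          _ = a * |x il| + b * |y il| := by
              rw [abs_mul, abs_mul, abs_of_nonneg ha, abs_of_nonneg hb]
    _ = a * (∑ il, |x il|) + b * (∑ il, |y il|) := by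
        rw [Finset.sum_add_distrib, Finset.mul_sum, Finset.mul_sum]
    _ ≤ a * 1 + b * 1 := by
        apply add_le_add <;> apply mul_le_mul_of_nonneg_left <;> assumption
    _ = 1 := by rw [mul_one, mul_one, hab]

lemma convex_Hbar (N : ℕ) : Convex ℝ (subspaceHbar N) := by
  intro x hx y hy a b _ _ _
  intro j
  simp only [Pi.add_apply, Pi.smul_apply, smul_eq_mul]
  rw [Finset.sum_add_distrib, ← Finset.mul_sum, ← Finset.mul_sum, hx j, hy j]
  ring

lemma zero_mem_conv {N : ℕ} (hN : 2 ≤ N) :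
    (0 : Fin N × Fin 2 → ℝ) ∈ convexHull ℝ (vertexSetVbar N) := by
  have h0 : (0 : ℕ) < N := by omega
  have h1 : (1 : ℕ) < N := by omega
  set p : Fin N := ⟨0, h0⟩
  set q : Fin N := ⟨1, h1⟩
  have hpq : p ≠ q := by simp [p, q, Fin.ext_iff]
  have hv1 : vfun p q 0 ∈ convexHull ℝ (vertexSetVbar N) :=
    subset_convexHull ℝ _ (vfun_mem 0 hpq)
  have hv2 : vfun q p 0 ∈ convexHull ℝ (vertexSetVbar N) :=
    subset_convexHull ℝ _ (vfun_mem 0 hpq.symm)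
  have key := (convex_convexHull ℝ (vertexSetVbar N)) hv1 hv2
    (by norm_num : (0:ℝ) ≤ 1/2) (by norm_num : (0:ℝ) ≤ 1/2) (by norm_num)
  convert key using 1
  funext il
  simp only [Pi.add_apply, Pi.smul_apply, smul_eq_mul, Pi.zero_apply, vfun]
  by_cases h1 : il = (p, 0)
  · simp [h1, hpq, hpq.symm, Prod.ext_iff]
  · by_cases h2 : il = (q, 0)
    · simp [h1, h2, hpq, hpq.symm, Prod.ext_iff]
    · simp [h1, h2]

lemma mem_conv_of_Hbar_cross {N : ℕ} (hN : 2 ≤ N) :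
    ∀ n : ℕ, ∀ x : Fin N × Fin 2 → ℝ,
      (Finset.univ.filter (fun il => x il ≠ 0)).card ≤ n →
      x ∈ subspaceHbar N → x ∈ crossPolytope2 N →
      x ∈ convexHull ℝ (vertexSetVbar N) := by
  intro n
  induction n with
  | zero =>
    intro x hcard _ _
    have hx : x = 0 := by
      funext il
      show x il = 0
      by_contra h
      have : il ∈ Finset.univ.filter (fun il => x il ≠ 0) := by simp [h]
      have := Finset.card_pos.mpr ⟨il, this⟩
      omega
    rw [hx]; exact zero_mem_conv hN
  | succ n ih =>
    intro x hcard hH hP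
    by_cases hx0 : x = 0
    · rw [hx0]; exact zero_mem_conv hN
    · -- find a nonzero coordinate
      obtain ⟨il₀, hil₀⟩ : ∃ il, x il ≠ 0 := by
        by_contra h
        push_neg at h
        exact hx0 (funext h)
      set j : Fin 2 := il₀.2 with hj
      have hil₀' : x (il₀.1, j) ≠ 0 := by rwa [hj, Prod.mk.eta]
      have hcol : ∑ i, x (i, j) = 0 := hH j
      -- positive entry
      obtain ⟨p, hp⟩ : ∃ p, 0 < x (p, j) := by
        by_contra h
        push_neg at h
        have := (Finset.sum_eq_zero_iff_of_nonpos (fun i _ => h i)).mp hcol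
        exact hil₀' (this il₀.1 (Finset.mem_univ _))
      obtain ⟨q, hq⟩ : ∃ q, x (q, j) < 0 := by
        by_contra h
        push_neg at h
        have := (Finset.sum_eq_zero_iff_of_nonneg (fun i _ => h i)).mp hcol
        exact hil₀' (this il₀.1 (Finset.mem_univ _))
      have hpq : p ≠ q := by
        intro h; rw [h] at hp; linarith
      have hab : (p, j) ≠ (q, j) := by simp [hpq]
      set t : ℝ := min (x (p, j)) (-(x (q, j))) with ht
      have ht0 : 0 < t := lt_min hp (by linarith)
      have htp : t ≤ x (p, j) := min_le_left _ _
      have htq : t ≤ -(x (q, j)) := min_le_right _ _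
      set v : Fin N × Fin 2 → ℝ := vfun p q j with hv
      set x' : Fin N × Fin 2 → ℝ := fun il => x il - (2 * t) * v il with hx'
      -- pointwise values
      have hx'a : x' (p, j) = x (p, j) - t := by simp [hx', hv, vfun]; ring
      have hx'b : x' (q, j) = x (q, j) + t := by simp [hx', hv, vfun, hab.symm]; ring
      have hx'o : ∀ il, il ≠ (p, j) → il ≠ (q, j) → x' il = x il := by
        intro il h1 h2; simp [hx', hv, vfun, h1, h2]
      -- abs decomposition
      have habs : ∀ il, |x' il| = |x il| - (if il = (p, j) then t else if il = (q, j) then t else 0) := by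
        intro il
        by_cases h1 : il = (p, j)
        · subst h1
          rw [hx'a, if_pos rfl, abs_of_nonneg (by linarith), abs_of_pos hp]
        · by_cases h2 : il = (q, j)
          · subst h2
            rw [hx'b, if_neg h1, if_pos rfl, abs_of_nonpos (by linarith),
              abs_of_neg hq]
            ring
          · rw [hx'o il h1 h2, if_neg h1, if_neg h2, sub_zero]
      have hsum' : ∑ il, |x' il| = (∑ il, |x il|) - 2 * t := by
        simp_rw [habs, Finset.sum_sub_distrib, sum_ite_pair hab]
        ring
      -- column sums of x'
      have hH' : ∀ j', ∑ i, x' (i, j') = 0 := by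
        intro j'
        simp only [hx']
        rw [Finset.sum_sub_distrib, hH j', ← Finset.mul_sum, vfun_colsum j hpq j']
        ring
      -- 2t ≤ ∑ |x|
      have h2t : 2 * t ≤ ∑ il, |x il| := by
        have hsub : ({(p, j), (q, j)} : Finset (Fin N × Fin 2)) ⊆ Finset.univ :=
          Finset.subset_univ _
        have := Finset.sum_le_sum_of_subset_of_nonneg hsub
          (fun il _ _ => abs_nonneg (x il))
        have hpair : ∑ il ∈ ({(p, j), (q, j)} : Finset (Fin N × Fin 2)), |x il|
            = |x (p, j)| + |x (q, j)| := Finset.sum_pair hab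
        rw [hpair] at this
        have : 2 * t ≤ |x (p, j)| + |x (q, j)| := by
          rw [abs_of_pos hp, abs_of_neg hq]; linarith
        linarith [Finset.sum_le_sum_of_subset_of_nonneg hsub
          (fun il _ _ => abs_nonneg (x il)), hpair]
      have hP1 : ∑ il, |x il| ≤ 1 := hP
      -- support of x' is contained in support of x
      have hsupp_sub : Finset.univ.filter (fun il => x' il ≠ 0)
          ⊆ Finset.univ.filter (fun il => x il ≠ 0) := by
        intro il hil
        simp only [Finset.mem_filter, Finset.mem_univ, true_and] at hil ⊢
        by_cases h1 : il = (p, j)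
        · subst h1; exact ne_of_gt hp
        · by_cases h2 : il = (q, j)
          · subst h2; exact ne_of_lt hq
          · rwa [hx'o il h1 h2] at hil
      -- one coordinate is killed
      obtain ⟨c, hcmem, hc0⟩ : ∃ c, c ∈ Finset.univ.filter (fun il => x il ≠ 0) ∧ x' c = 0 := by
        rcases min_cases (x (p, j)) (-(x (q, j))) with ⟨he, _⟩ | ⟨he, _⟩
        · refine ⟨(p, j), by simp [ne_of_gt hp], ?_⟩
          rw [hx'a, ht, he]; ring
        · refine ⟨(q, j), by simp [ne_of_lt hq], ?_⟩
          rw [hx'b, ht, he]; ring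
      have hcard1 : 1 ≤ (Finset.univ.filter (fun il => x il ≠ 0)).card :=
        Finset.card_pos.mpr ⟨c, hcmem⟩
      have hcard' : (Finset.univ.filter (fun il => x' il ≠ 0)).card ≤ n := by
        have hsub2 : Finset.univ.filter (fun il => x' il ≠ 0)
            ⊆ (Finset.univ.filter (fun il => x il ≠ 0)).erase c := by
          intro il hil
          refine Finset.mem_erase.mpr ⟨?_, hsupp_sub hil⟩
          intro h
          subst h
          simp only [Finset.mem_filter, Finset.mem_univ, true_and] at hil
          exact hil hc0
        have := Finset.card_le_card hsub2
        rw [Finset.card_erase_of_mem hcmem] at this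
        omega
      have h2t1 : 2 * t ≤ 1 := le_trans h2t hP1
      rcases eq_or_lt_of_le h2t1 with heq | hlt
      · -- 2t = 1 : x = v
        have hsum0 : ∑ il, |x' il| ≤ 0 := by rw [hsum']; linarith
        have hnn : ∀ il ∈ Finset.univ, (0:ℝ) ≤ |x' il| := fun _ _ => abs_nonneg _
        have hzero := (Finset.sum_eq_zero_iff_of_nonneg hnn).mp
          (le_antisymm hsum0 (Finset.sum_nonneg hnn))
        have hxv : x = v := by
          funext il
          have h := abs_eq_zero.mp (hzero il (Finset.mem_univ il))
          simp only [hx'] at h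
          have : x il = 2 * t * v il := by linarith
          rw [this, heq, one_mul]
        rw [hxv]
        exact subset_convexHull ℝ _ (vfun_mem j hpq)
      · -- 2t < 1 : peel off the vertex
        set μ : ℝ := 1 - 2 * t with hμ
        have hμ0 : 0 < μ := by simp only [hμ]; linarith
        set x'' : Fin N × Fin 2 → ℝ := fun il => μ⁻¹ * x' il with hx''
        have hsame : ∀ il, (x'' il ≠ 0) ↔ (x' il ≠ 0) := by
          intro il
          simp only [hx'', mul_ne_zero_iff]
          exact ⟨fun h => h.2, fun h => ⟨inv_ne_zero (ne_of_gt hμ0), h⟩⟩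
        have hcard'' : (Finset.univ.filter (fun il => x'' il ≠ 0)).card ≤ n := by
          have : Finset.univ.filter (fun il => x'' il ≠ 0)
              = Finset.univ.filter (fun il => x' il ≠ 0) := by
            apply Finset.filter_congr
            intro il _
            exact hsame il
          rw [this]; exact hcard'
        have hH'' : x'' ∈ subspaceHbar N := by
          intro j'
          simp only [hx'']
          rw [← Finset.mul_sum, hH' j', mul_zero]
        have hP'' : x'' ∈ crossPolytope2 N := by
          show ∑ il, |x'' il| ≤ 1
          have habs'' : ∀ il, |x'' il| = μ⁻¹ * |x' il| := by
            intro il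
            simp only [hx'']
            rw [abs_mul, abs_of_pos (inv_pos.mpr hμ0)]
          simp_rw [habs'', ← Finset.mul_sum, hsum']
          have h1 : (∑ il, |x il|) - 2 * t ≤ μ := by simp only [hμ]; linarith
          calc μ⁻¹ * ((∑ il, |x il|) - 2 * t) ≤ μ⁻¹ * μ :=
                mul_le_mul_of_nonneg_left h1 (le_of_lt (inv_pos.mpr hμ0))
            _ = 1 := inv_mul_cancel₀ (ne_of_gt hμ0)
        have hx''mem := ih x'' hcard'' hH'' hP''
        have hvmem : v ∈ convexHull ℝ (vertexSetVbar N) :=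
          subset_convexHull ℝ _ (vfun_mem j hpq)
        have key := (convex_convexHull ℝ (vertexSetVbar N)) hvmem hx''mem
          (by linarith : (0:ℝ) ≤ 2 * t) (le_of_lt hμ0) (by simp only [hμ]; ring)
        convert key using 1
        funext il
        simp only [Pi.add_apply, Pi.smul_apply, smul_eq_mul, hx'']
        rw [← mul_assoc, mul_inv_cancel₀ (ne_of_gt hμ0), one_mul]
        simp only [hx']
        ring

lemma Vbar_subset {N : ℕ} : vertexSetVbar N ⊆ crossPolytope2 N ∩ subspaceHbar N := by
  rintro w ⟨p, q, j, hpq, rfl⟩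
  constructor
  · show ∑ il, |vfun p q j il| ≤ 1
    rw [vfun_abs_sum j hpq]
  · intro j'
    exact vfun_colsum j hpq j'

lemma conv_Vbar_eq {N : ℕ} (hN : 2 ≤ N) :
    convexHull ℝ (vertexSetVbar N) = crossPolytope2 N ∩ subspaceHbar N := by
  apply le_antisymm
  · exact convexHull_min Vbar_subset ((convex_cross N).inter (convex_Hbar N))
  · rintro x ⟨hP, hH⟩
    exact mem_conv_of_Hbar_cross hN _ x le_rfl hH hP

lemma colsum_kronTr {N : ℕ} {S : Matrix (Fin N) (Fin N) ℝ} (hS : ∀ i, ∑ j, S i j = 1)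
    (x : Fin N × Fin 2 → ℝ) (j : Fin 2) :
    ∑ i, kronTr S x (i, j) = ∑ k, x (k, j) := by
  have hdef : ∀ i : Fin N, kronTr S x (i, j) = ∑ k, S k i * x (k, j) := fun i => rfl
  simp_rw [hdef]
  rw [Finset.sum_comm]
  apply Finset.sum_congr rfl
  intro k _
  rw [← Finset.sum_mul, hS k, one_mul]

theorem image_convexHull_Vbar_eq_image_crossPolytope_inter_Hbar {N : ℕ} (hN : 2 ≤ N)
    (α β : ℝ) (hα : 0 < α ∧ α ≤ 1 / 2) (hβ : 0 ≤ β ∧ β < α / 2)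
    (S : Matrix (Fin N) (Fin N) ℝ) (hS : Admissible α β S) :
    kronTr S '' convexHull ℝ (vertexSetVbar N) =
      (kronTr S '' crossPolytope2 N) ∩ subspaceHbar N := by
  obtain ⟨hrow, -, -⟩ := hS
  ext z
  constructor
  · rintro ⟨x, hx, rfl⟩
    rw [conv_Vbar_eq hN] at hx
    refine ⟨⟨x, hx.1, rfl⟩, ?_⟩
    intro j
    rw [colsum_kronTr hrow x j, hx.2 j]
  · rintro ⟨⟨y, hy, rfl⟩, hH⟩
    have hyH : y ∈ subspaceHbar N := by
      intro j
      have := hH j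
      rwa [colsum_kronTr hrow y j] at this
    refine ⟨y, ?_, rfl⟩
    rw [conv_Vbar_eq hN]
    exact ⟨hy, hyH⟩
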